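/- arXiv:2312.16938 — 3 statements merged into one kernel-verified Lean document; each statement's English description precedes it below -/
import Mathlib

section
/- Let B and C be smooth functions on an interval, and let f, g be smooth functions satisfying B(g(y))·(g'(y))² = C(y) and 2 f'(y) g'(y) + f(y) g''(y) = 0. If ψ satisfies -ε ψ'' + B·ψ = 0, then φ(y) = f(y)·ψ(g(y)) satisfies -ε φ'' + C·φ = -ε (f''/f)·φ (at points where f does not vanish). -/
/-- Langer's transformation: if `B(g(y)) g'(y)² = C(y)` and `2 f' g' + f g'' = 0`,
and `ψ` solves `-ε ψ'' + B ψ = 0`, then `φ = f · (ψ ∘ g)` solves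
`-ε φ'' + C φ = -ε (f''/f) φ` wherever `f ≠ 0`. -/
theorem langer_transformation
    (ε : ℂ) (B C : ℝ → ℂ) (f : ℝ → ℂ) (g : ℝ → ℝ) (ψ : ℝ → ℂ)
    (hf : ContDiff ℝ 2 f) (hg : ContDiff ℝ 2 g) (hψ : ContDiff ℝ 2 ψ)
    (hBC : ∀ y : ℝ, B (g y) * (Complex.ofReal (deriv g y)) ^ 2 = C y)
    (hfg : ∀ y : ℝ, 2 * deriv f y * (Complex.ofReal (deriv g y)) + f y * (Complex.ofReal (deriv (deriv g) y)) = 0)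
    (hψeq : ∀ y : ℝ, -ε * deriv (deriv ψ) y + B y * ψ y = 0) :
    ∀ y : ℝ, f y ≠ 0 →
      -ε * deriv (deriv (fun t => f t * ψ (g t))) y + C y * (f y * ψ (g y))
        = -ε * (deriv (deriv f) y / f y) * (f y * ψ (g y)) := by
  have h2 : (2 : ℕ∞) = 1 + 1 := by norm_num
  have hf' : ContDiff ℝ 1 (deriv f) := (contDiff_succ_iff_deriv.mp (show ContDiff ℝ (1+1) f by norm_num; exact hf)).2.2
  have hg' : ContDiff ℝ 1 (deriv g) := (contDiff_succ_iff_deriv.mp (show ContDiff ℝ (1+1) g by norm_num; exact hg)).2.2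
  have hψ' : ContDiff ℝ 1 (deriv ψ) := (contDiff_succ_iff_deriv.mp (show ContDiff ℝ (1+1) ψ by norm_num; exact hψ)).2.2
  have hfd : ∀ y : ℝ, HasDerivAt f (deriv f y) y := fun y =>
    ((hf.differentiable two_ne_zero) y).hasDerivAt
  have hgd : ∀ y : ℝ, HasDerivAt g (deriv g y) y := fun y =>
    ((hg.differentiable two_ne_zero) y).hasDerivAt
  have hψd : ∀ y : ℝ, HasDerivAt ψ (deriv ψ y) y := fun y =>
    ((hψ.differentiable two_ne_zero) y).hasDerivAt
  have hfd2 : ∀ y : ℝ, HasDerivAt (deriv f) (deriv (deriv f) y) y := fun y =>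
    ((hf'.differentiable one_ne_zero) y).hasDerivAt
  have hgd2 : ∀ y : ℝ, HasDerivAt (deriv g) (deriv (deriv g) y) y := fun y =>
    ((hg'.differentiable one_ne_zero) y).hasDerivAt
  have hψd2 : ∀ y : ℝ, HasDerivAt (deriv ψ) (deriv (deriv ψ) y) y := fun y =>
    ((hψ'.differentiable one_ne_zero) y).hasDerivAt
  -- first derivative of φ
  have hφ1 : ∀ y : ℝ, HasDerivAt (fun t => f t * ψ (g t))
      (deriv f y * ψ (g y) + f y * ((Complex.ofReal (deriv g y)) * deriv ψ (g y))) y := by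
    intro y
    have hc : HasDerivAt (fun t => ψ (g t)) ((Complex.ofReal (deriv g y)) * deriv ψ (g y)) y := by
      have := HasDerivAt.scomp (𝕜' := ℝ) y (hψd (g y)) (hgd y)
      rw [Complex.real_smul] at this
      exact this
    exact (hfd y).mul hc
  have hD1 : deriv (fun t => f t * ψ (g t)) =
      fun y => deriv f y * ψ (g y) + f y * ((Complex.ofReal (deriv g y)) * deriv ψ (g y)) :=
    funext fun y => (hφ1 y).deriv
  intro y hfy
  -- second derivative
  have hc1 : HasDerivAt (fun t => ψ (g t)) ((Complex.ofReal (deriv g y)) * deriv ψ (g y)) y := by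
    have := HasDerivAt.scomp (𝕜' := ℝ) y (hψd (g y)) (hgd y)
    rw [Complex.real_smul] at this
    exact this
  have hc2 : HasDerivAt (fun t => deriv ψ (g t)) ((Complex.ofReal (deriv g y)) * deriv (deriv ψ) (g y)) y := by
    have := HasDerivAt.scomp (𝕜' := ℝ) y (hψd2 (g y)) (hgd y)
    rw [Complex.real_smul] at this
    exact this
  have hc3 : HasDerivAt (fun t => (Complex.ofReal (deriv g t))) ((Complex.ofReal (deriv (deriv g) y))) y :=
    (hgd2 y).ofReal_comp
  have hφ2 : HasDerivAt (deriv (fun t => f t * ψ (g t)))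
      (deriv (deriv f) y * ψ (g y)
        + 2 * deriv f y * (Complex.ofReal (deriv g y)) * deriv ψ (g y)
        + f y * (Complex.ofReal (deriv (deriv g) y)) * deriv ψ (g y)
        + f y * (Complex.ofReal (deriv g y)) ^ 2 * deriv (deriv ψ) (g y)) y := by
    rw [hD1]
    have h1 := (hfd2 y).mul hc1
    have h2 := (hfd y).mul (hc3.mul hc2)
    have h3 := h1.add h2
    refine h3.congr_deriv ?_
    simp only [Pi.mul_apply]
    ring
  have key : deriv (deriv (fun t => f t * ψ (g t))) y =
      deriv (deriv f) y * ψ (g y)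
        + 2 * deriv f y * (Complex.ofReal (deriv g y)) * deriv ψ (g y)
        + f y * (Complex.ofReal (deriv (deriv g) y)) * deriv ψ (g y)
        + f y * (Complex.ofReal (deriv g y)) ^ 2 * deriv (deriv ψ) (g y) := hφ2.deriv
  have hr : -ε * (deriv (deriv f) y / f y) * (f y * ψ (g y))
      = -ε * deriv (deriv f) y * ψ (g y) := by
    field_simp
  rw [key, hr]
  linear_combination (-ε * deriv ψ (g y)) * hfg y
    + (f y * (Complex.ofReal (deriv g y)) ^ 2) * hψeq (g y)
    - (f y * ψ (g y)) * hBC y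
end

section
/- Let ψ be a solution of the Rayleigh equation (U - c)(ψ'' - α²ψ) - U''ψ = 0 and define Ω(y) = ψ / ((U - c)·(U'ψ - (U - c)ψ')) at points where the denominator is nonzero. Then Ω satisfies the Riccati-type equation Ω' = α² Y Ω² - Y^{-1}, where Y = (U - c)². -/
set_option maxHeartbeats 1000000 in


/-- Miles' transformation: if `ψ` solves the Rayleigh equation
`(U - c)(ψ'' - α²ψ) - U''ψ = 0` on an open set where the denominator does not
vanish, then `Ω = ψ / ((U - c)(U'ψ - (U - c)ψ'))` satisfies the Riccati
equation `Ω' = α² Y Ω² - Y⁻¹` with `Y = (U - c)²`. -/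
theorem miles_riccati (U : ℝ → ℂ) (α : ℝ) (c : ℂ) (ψ : ℝ → ℂ) (s : Set ℝ)
    (hs : IsOpen s) (hU : ContDiff ℝ 2 U) (hψ : ContDiff ℝ 2 ψ)
    (hRay : ∀ y ∈ s,
      (U y - c) * (deriv (deriv ψ) y - (α : ℂ) ^ 2 * ψ y)
        - deriv (deriv U) y * ψ y = 0)
    (hden : ∀ y ∈ s,
      (U y - c) * (deriv U y * ψ y - (U y - c) * deriv ψ y) ≠ 0) :
    ∀ y ∈ s,
      deriv (fun t => ψ t / ((U t - c) * (deriv U t * ψ t - (U t - c) * deriv ψ t))) y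
        = (α : ℂ) ^ 2 * (U y - c) ^ 2 *
            (ψ y / ((U y - c) * (deriv U y * ψ y - (U y - c) * deriv ψ y))) ^ 2
          - ((U y - c) ^ 2)⁻¹ := by
  intro y hy
  have hU2 : ContDiff ℝ ((1 : ℕ∞) + 1) U := by exact_mod_cast hU
  have hψ2 : ContDiff ℝ ((1 : ℕ∞) + 1) ψ := by exact_mod_cast hψ
  have hU' : ContDiff ℝ 1 (deriv U) := (contDiff_succ_iff_deriv.mp hU2).2.2
  have hψ' : ContDiff ℝ 1 (deriv ψ) := (contDiff_succ_iff_deriv.mp hψ2).2.2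
  have hUd : HasDerivAt U (deriv U y) y :=
    ((hU.differentiable (by norm_num)) y).hasDerivAt
  have hψd : HasDerivAt ψ (deriv ψ y) y :=
    ((hψ.differentiable (by norm_num)) y).hasDerivAt
  have hUdd : HasDerivAt (deriv U) (deriv (deriv U) y) y :=
    ((hU'.differentiable (by norm_num)) y).hasDerivAt
  have hψdd : HasDerivAt (deriv ψ) (deriv (deriv ψ) y) y :=
    ((hψ'.differentiable (by norm_num)) y).hasDerivAt
  set u := U y
  set u' := deriv U y
  set u'' := deriv (deriv U) y
  set p := ψ y
  set p' := deriv ψ y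
  set p'' := deriv (deriv ψ) y
  have hUc : HasDerivAt (fun t => U t - c) u' y := hUd.sub_const c
  have hE : HasDerivAt (fun t => deriv U t * ψ t - (U t - c) * deriv ψ t)
      (u'' * p + u' * p' - (u' * p' + (u - c) * p'')) y :=
    (hUdd.mul hψd).sub (hUc.mul hψdd)
  have hD : HasDerivAt (fun t => (U t - c) * (deriv U t * ψ t - (U t - c) * deriv ψ t))
      (u' * (u' * p - (u - c) * p') +
        (u - c) * (u'' * p + u' * p' - (u' * p' + (u - c) * p''))) y :=
    hUc.mul hE
  have hne : (u - c) * (u' * p - (u - c) * p') ≠ 0 := hden y hy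
  have hΩ : deriv (fun t => ψ t / ((U t - c) * (deriv U t * ψ t - (U t - c) * deriv ψ t))) y =
      (p' * ((u - c) * (u' * p - (u - c) * p')) -
        p * (u' * (u' * p - (u - c) * p') +
          (u - c) * (u'' * p + u' * p' - (u' * p' + (u - c) * p'')))) /
        ((u - c) * (u' * p - (u - c) * p')) ^ 2 := (hψd.div hD hne).deriv
  rw [hΩ]
  have huc : u - c ≠ 0 := fun h => hne (by rw [h]; ring)
  have hE0 : u' * p - (u - c) * p' ≠ 0 := fun h => hne (by rw [h]; ring)
  have hray := hRay y hy
  have key : p' * ((u - c) * (u' * p - (u - c) * p')) -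
      p * (u' * (u' * p - (u - c) * p') +
        (u - c) * (u'' * p + u' * p' - (u' * p' + (u - c) * p''))) =
      (α : ℂ) ^ 2 * (u - c) ^ 2 * p ^ 2 - (u' * p - (u - c) * p') ^ 2 := by
    linear_combination (p * (u - c)) * hray
  rw [key]
  generalize u' * p - (u - c) * p' = E at hE0 ⊢
  field_simp
end

section
/- Let φ₁, φ₂, Q₁ be holomorphic functions near 0 with ‖φ₁‖_ρ, ‖φ₂‖_ρ, ‖Q₁‖_ρ < ∞ for some ρ > 0 with ρ‖φ₁‖_ρ < 1/2. Then there exists a holomorphic function Q near 0 with Q(0) = 0 solving Y Q''(Y) + 2Q'(Y) = φ₁(Y) Q(Y) + φ₂(Y) Q₁(Y), and ‖Q‖_ρ ≲ ‖Q₁‖_ρ with constant depending only on ‖φ₂‖_ρ and |c²₀|. -/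
open Finset in
/-- Coefficients of the solution: `a 0 = 0`,
`a (n+1) = ((c1 ⋆ a) n + (c2 ⋆ q1) n) / ((n+1)(n+2))`. -/
noncomputable def rayCoeff (c1 c2 q1 : ℕ → ℂ) : ℕ → ℂ
  | 0 => 0
  | (n+1) =>
      ((∑ k ∈ range (n+1), c1 k * rayCoeff c1 c2 q1 (n - k)) +
        ∑ k ∈ range (n+1), c2 k * q1 (n - k)) / (((n+1)*(n+2) : ℕ) : ℂ)
  decreasing_by exact Nat.lt_succ_of_le (Nat.sub_le n k)

lemma rayCoeff_succ (c1 c2 q1 : ℕ → ℂ) (n : ℕ) :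
    rayCoeff c1 c2 q1 (n+1) =
      ((∑ k ∈ Finset.range (n+1), c1 k * rayCoeff c1 c2 q1 (n - k)) +
        ∑ k ∈ Finset.range (n+1), c2 k * q1 (n - k)) / (((n+1)*(n+2) : ℕ) : ℂ) := by
  rw [rayCoeff]

/-- Partial Cauchy products are bounded by products of partial sums (nonneg case). -/
lemma ray_conv_partial_le (f g : ℕ → ℝ) (hf : ∀ n, 0 ≤ f n) (hg : ∀ n, 0 ≤ g n) (N : ℕ) :
    ∑ m ∈ Finset.range N, ∑ k ∈ Finset.range (m+1), f k * g (m - k)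
      ≤ (∑ k ∈ Finset.range N, f k) * ∑ k ∈ Finset.range N, g k := by
  classical
  set F : ℕ → ℝ := fun k => if k < N then f k else 0 with hF
  set G : ℕ → ℝ := fun k => if k < N then g k else 0 with hG
  have hFz : ∀ b ∉ Finset.range N, F b = 0 := by
    intro b hb; simp only [Finset.mem_range] at hb; simp [hF, hb]
  have hGz : ∀ b ∉ Finset.range N, G b = 0 := by
    intro b hb; simp only [Finset.mem_range] at hb; simp [hG, hb]
  have hFn : Summable fun k => ‖F k‖ :=
    summable_of_ne_finset_zero (s := Finset.range N) (fun b hb => by rw [hFz b hb]; simp)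
  have hGn : Summable fun k => ‖G k‖ :=
    summable_of_ne_finset_zero (s := Finset.range N) (fun b hb => by rw [hGz b hb]; simp)
  have hcauchy := tsum_mul_tsum_eq_tsum_sum_range_of_summable_norm hFn hGn
  have hH : Summable fun n => ∑ k ∈ Finset.range (n+1), F k * G (n - k) :=
    (summable_norm_sum_mul_range_of_summable_norm hFn hGn).of_norm
  have hHnn : ∀ n, 0 ≤ ∑ k ∈ Finset.range (n+1), F k * G (n - k) := by
    intro n
    refine Finset.sum_nonneg fun k _ => mul_nonneg ?_ ?_ <;>
      · simp only [hF, hG]; split <;> simp [hf, hg]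
  have h1 : ∑ m ∈ Finset.range N, ∑ k ∈ Finset.range (m+1), f k * g (m - k)
      = ∑ m ∈ Finset.range N, ∑ k ∈ Finset.range (m+1), F k * G (m - k) := by
    refine Finset.sum_congr rfl fun m hm => Finset.sum_congr rfl fun k hk => ?_
    simp only [Finset.mem_range] at hm hk
    have hkN : k < N := lt_of_lt_of_le hk (Nat.succ_le_of_lt hm) |>.trans_le le_rfl
    have hmkN : m - k < N := lt_of_le_of_lt (Nat.sub_le m k) hm
    simp [hF, hG, hkN, hmkN]
  have h2 : ∑ m ∈ Finset.range N, ∑ k ∈ Finset.range (m+1), F k * G (m - k)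
      ≤ ∑' m, ∑ k ∈ Finset.range (m+1), F k * G (m - k) :=
    Summable.sum_le_tsum _ (fun m _ => hHnn m) hH
  have hFt : ∑' k, F k = ∑ k ∈ Finset.range N, f k := by
    rw [tsum_eq_sum hFz]
    exact Finset.sum_congr rfl fun k hk => by
      simp only [Finset.mem_range] at hk; simp [hF, hk]
  have hGt : ∑' k, G k = ∑ k ∈ Finset.range N, g k := by
    rw [tsum_eq_sum hGz]
    exact Finset.sum_congr rfl fun k hk => by
      simp only [Finset.mem_range] at hk; simp [hG, hk]
  calc ∑ m ∈ Finset.range N, ∑ k ∈ Finset.range (m+1), f k * g (m - k)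
      = ∑ m ∈ Finset.range N, ∑ k ∈ Finset.range (m+1), F k * G (m - k) := h1
    _ ≤ ∑' m, ∑ k ∈ Finset.range (m+1), F k * G (m - k) := h2
    _ = (∑' k, F k) * ∑' k, G k := hcauchy.symm
    _ = (∑ k ∈ Finset.range N, f k) * ∑ k ∈ Finset.range N, g k := by rw [hFt, hGt]

/-- Geometric domination: `n² rⁿ ≤ C ρⁿ` for `0 ≤ r < ρ`. -/
lemma ray_exists_bound (ρ r : ℝ) (hρ : 0 < ρ) (hr : 0 ≤ r) (h : r < ρ) :
    ∃ C : ℝ, 0 ≤ C ∧ ∀ n : ℕ, (n : ℝ)^2 * r^n ≤ C * ρ^n := by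
  have hq : ‖r / ρ‖ < 1 := by
    rw [Real.norm_eq_abs, abs_of_nonneg (div_nonneg hr hρ.le)]
    exact (div_lt_one hρ).2 h
  have hs : Summable fun n : ℕ => (n : ℝ)^2 * (r/ρ)^n :=
    summable_pow_mul_geometric_of_norm_lt_one 2 hq
  have hnn : ∀ n : ℕ, 0 ≤ (n : ℝ)^2 * (r/ρ)^n := fun n =>
    mul_nonneg (by positivity) (pow_nonneg (div_nonneg hr hρ.le) n)
  refine ⟨∑' n : ℕ, (n : ℝ)^2 * (r/ρ)^n, tsum_nonneg hnn, fun n => ?_⟩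
  have h1 : (n : ℝ)^2 * (r/ρ)^n ≤ ∑' n : ℕ, (n : ℝ)^2 * (r/ρ)^n :=
    Summable.le_tsum hs n fun j _ => hnn j
  have h2 : r^n = (r/ρ)^n * ρ^n := by
    rw [← mul_pow, div_mul_cancel₀ _ hρ.ne']
  calc (n : ℝ)^2 * r^n = ((n : ℝ)^2 * (r/ρ)^n) * ρ^n := by rw [h2]; ring
    _ ≤ (∑' n : ℕ, (n : ℝ)^2 * (r/ρ)^n) * ρ^n :=
        mul_le_mul_of_nonneg_right h1 (pow_nonneg hρ.le n)

section SummableAux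

variable {ρ : ℝ} {a : ℕ → ℂ}

lemma ray_summable0 (ha : Summable fun n => ‖a n‖ * ρ ^ n) (hρ : 0 < ρ)
    {r : ℝ} (hr0 : 0 ≤ r) (hr : r < ρ) :
    Summable fun n => ‖a n‖ * r ^ n := by
  refine ha.of_nonneg_of_le (fun n => by positivity) fun n => ?_
  exact mul_le_mul_of_nonneg_left (pow_le_pow_left₀ hr0 hr.le n) (norm_nonneg _)

lemma ray_summable1 (ha : Summable fun n => ‖a n‖ * ρ ^ n) (hρ : 0 < ρ)
    {r : ℝ} (hr0 : 0 < r) (hr : r < ρ) :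
    Summable fun n => ‖a n‖ * ((n : ℝ) * r ^ (n - 1)) := by
  obtain ⟨C, hC0, hC⟩ := ray_exists_bound ρ r hρ hr0.le hr
  refine Summable.of_nonneg_of_le (fun n => by positivity)
    (fun n => ?_) ((ha.mul_left (C / r)))
  rcases n with _ | m
  · simp; positivity
  · have key : ((m+1 : ℕ) : ℝ) * r ^ m ≤ C / r * ρ ^ (m+1) := by
      rw [div_mul_eq_mul_div, le_div_iff₀ hr0]
      have h2 := hC (m+1)
      have h3 : ((m+1 : ℕ) : ℝ) * r ^ m * r = ((m+1 : ℕ) : ℝ) * r ^ (m+1) := by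
        ring
      have h4 : ((m+1 : ℕ) : ℝ) * r ^ (m+1) ≤ ((m+1 : ℕ) : ℝ)^2 * r ^ (m+1) := by
        have h5 : (1 : ℝ) ≤ ((m+1 : ℕ) : ℝ) := by exact_mod_cast Nat.one_le_iff_ne_zero.2 (Nat.succ_ne_zero m)
        have h6 : ((m+1 : ℕ) : ℝ) ≤ ((m+1 : ℕ) : ℝ)^2 := by nlinarith
        exact mul_le_mul_of_nonneg_right h6 (pow_nonneg hr0.le (m+1))
      linarith
    have hsub : (m + 1) - 1 = m := Nat.succ_sub_one m
    calc ‖a (m+1)‖ * (((m+1 : ℕ) : ℝ) * r ^ ((m+1) - 1))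
        = ‖a (m+1)‖ * (((m+1 : ℕ) : ℝ) * r ^ m) := by rw [hsub]
      _ ≤ ‖a (m+1)‖ * (C / r * ρ ^ (m+1)) :=
          mul_le_mul_of_nonneg_left key (norm_nonneg _)
      _ = C / r * (‖a (m+1)‖ * ρ ^ (m+1)) := by ring

lemma ray_summable2 (ha : Summable fun n => ‖a n‖ * ρ ^ n) (hρ : 0 < ρ)
    {r : ℝ} (hr0 : 0 < r) (hr : r < ρ) :
    Summable fun n => ‖a n‖ * ((n : ℝ) * (((n - 1 : ℕ) : ℝ) * r ^ (n - 1 - 1))) := by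
  obtain ⟨C, hC0, hC⟩ := ray_exists_bound ρ r hρ hr0.le hr
  refine Summable.of_nonneg_of_le (fun n => by positivity)
    (fun n => ?_) ((ha.mul_left (C / r^2)))
  rcases n with _ | _ | m
  · simp; positivity
  · simp; positivity
  · have key : ((m+2 : ℕ) : ℝ) * (((m+1 : ℕ) : ℝ) * r ^ m) ≤ C / r^2 * ρ ^ (m+2) := by
      rw [div_mul_eq_mul_div, le_div_iff₀ (by positivity)]
      have h2 := hC (m+2)
      have h3 : ((m+2 : ℕ) : ℝ) * (((m+1 : ℕ) : ℝ) * r ^ m) * r^2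
          = ((m+2 : ℕ) : ℝ) * ((m+1 : ℕ) : ℝ) * r ^ (m+2) := by
        ring
      have h4 : ((m+2 : ℕ) : ℝ) * ((m+1 : ℕ) : ℝ) * r ^ (m+2)
          ≤ ((m+2 : ℕ) : ℝ)^2 * r ^ (m+2) := by
        have h5 : ((m+1 : ℕ) : ℝ) ≤ ((m+2 : ℕ) : ℝ) := by exact_mod_cast Nat.le_succ (m+1)
        have h6 : (0 : ℝ) ≤ ((m+2 : ℕ) : ℝ) := Nat.cast_nonneg _
        have h7 : ((m+2 : ℕ) : ℝ) * ((m+1 : ℕ) : ℝ) ≤ ((m+2 : ℕ) : ℝ)^2 := by nlinarith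
        exact mul_le_mul_of_nonneg_right h7 (pow_nonneg hr0.le (m+2))
      linarith
    calc ‖a (m+2)‖ * (((m+2 : ℕ) : ℝ) * ((((m+2) - 1 : ℕ) : ℝ) * r ^ ((m+2) - 1 - 1)))
        = ‖a (m+2)‖ * (((m+2 : ℕ) : ℝ) * (((m+1 : ℕ) : ℝ) * r ^ m)) := by norm_num
      _ ≤ ‖a (m+2)‖ * (C / r^2 * ρ ^ (m+2)) :=
          mul_le_mul_of_nonneg_left key (norm_nonneg _)
      _ = C / r^2 * (‖a (m+2)‖ * ρ ^ (m+2)) := by ring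

lemma ray_summable_fnorm (ha : Summable fun n => ‖a n‖ * ρ ^ n) (hρ : 0 < ρ)
    {Y : ℂ} (hY : ‖Y‖ < ρ) : Summable fun n => ‖a n * Y ^ n‖ :=
  (ray_summable0 ha hρ (norm_nonneg Y) hY).congr fun n => by
    rw [norm_mul, norm_pow]

lemma ray_summable_g (ha : Summable fun n => ‖a n‖ * ρ ^ n) (hρ : 0 < ρ)
    {Y : ℂ} (hY : ‖Y‖ < ρ) :
    Summable fun n => a n * ((n : ℂ) * Y ^ (n - 1)) := by
  have hr0 : (0:ℝ) < (‖Y‖ + ρ)/2 := by positivity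
  have hrρ : (‖Y‖ + ρ)/2 < ρ := by linarith [norm_nonneg Y]
  have hYr : ‖Y‖ ≤ (‖Y‖ + ρ)/2 := by linarith
  refine Summable.of_norm_bounded (ray_summable1 ha hρ hr0 hrρ) fun n => ?_
  rw [norm_mul, norm_mul, norm_pow, Complex.norm_natCast]
  gcongr

lemma ray_summable_h (ha : Summable fun n => ‖a n‖ * ρ ^ n) (hρ : 0 < ρ)
    {Y : ℂ} (hY : ‖Y‖ < ρ) :
    Summable fun n => a n * ((n : ℂ) * (((n - 1 : ℕ) : ℂ) * Y ^ (n - 1 - 1))) := by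
  have hr0 : (0:ℝ) < (‖Y‖ + ρ)/2 := by positivity
  have hrρ : (‖Y‖ + ρ)/2 < ρ := by linarith [norm_nonneg Y]
  have hYr : ‖Y‖ ≤ (‖Y‖ + ρ)/2 := by linarith
  refine Summable.of_norm_bounded (ray_summable2 ha hρ hr0 hrρ) fun n => ?_
  rw [norm_mul, norm_mul, norm_mul, norm_pow, Complex.norm_natCast, Complex.norm_natCast]
  gcongr

lemma ray_hasDerivAt_f (ha : Summable fun n => ‖a n‖ * ρ ^ n) (hρ : 0 < ρ)
    {Y : ℂ} (hY : ‖Y‖ < ρ) :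
    HasDerivAt (fun z : ℂ => ∑' n, a n * z ^ n)
      (∑' n, a n * ((n : ℂ) * Y ^ (n - 1))) Y := by
  have hr0 : (0:ℝ) < (‖Y‖ + ρ)/2 := by positivity
  have hrρ : (‖Y‖ + ρ)/2 < ρ := by linarith [norm_nonneg Y]
  have hYr : ‖Y‖ < (‖Y‖ + ρ)/2 := by linarith
  refine hasDerivAt_tsum_of_isPreconnected (ray_summable1 ha hρ hr0 hrρ)
    (Metric.isOpen_ball) ((convex_ball (0:ℂ) _).isPreconnected)
    (fun n z _ => (hasDerivAt_pow n z).const_mul (a n))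
    (fun n z hz => ?_) (Metric.mem_ball_self hr0) ?_ (mem_ball_zero_iff.2 hYr)
  · rw [mem_ball_zero_iff] at hz
    rw [norm_mul, norm_mul, norm_pow, Complex.norm_natCast]
    gcongr <;> first | exact norm_nonneg z | exact hz.le
  · refine summable_of_ne_finset_zero (s := {0}) fun b hb => ?_
    simp only [Finset.mem_singleton] at hb
    rw [zero_pow hb, mul_zero]

lemma ray_hasDerivAt_g (ha : Summable fun n => ‖a n‖ * ρ ^ n) (hρ : 0 < ρ)
    {Y : ℂ} (hY : ‖Y‖ < ρ) :
    HasDerivAt (fun z : ℂ => ∑' n, a n * ((n : ℂ) * z ^ (n - 1)))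
      (∑' n, a n * ((n : ℂ) * (((n - 1 : ℕ) : ℂ) * Y ^ (n - 1 - 1)))) Y := by
  have hr0 : (0:ℝ) < (‖Y‖ + ρ)/2 := by positivity
  have hrρ : (‖Y‖ + ρ)/2 < ρ := by linarith [norm_nonneg Y]
  have hYr : ‖Y‖ < (‖Y‖ + ρ)/2 := by linarith
  refine hasDerivAt_tsum_of_isPreconnected (ray_summable2 ha hρ hr0 hrρ)
    (Metric.isOpen_ball) ((convex_ball (0:ℂ) _).isPreconnected)
    (fun n z _ => ((hasDerivAt_pow (n-1) z).const_mul ((n : ℂ))).const_mul (a n))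
    (fun n z hz => ?_) (Metric.mem_ball_self hr0) ?_ (mem_ball_zero_iff.2 hYr)
  · rw [mem_ball_zero_iff] at hz
    rw [norm_mul, norm_mul, norm_mul, norm_pow, Complex.norm_natCast, Complex.norm_natCast]
    gcongr <;> first | exact norm_nonneg z | exact hz.le
  · refine summable_of_ne_finset_zero (s := {0, 1}) fun b hb => ?_
    simp only [Finset.mem_insert, Finset.mem_singleton] at hb
    push_neg at hb
    have : b - 1 ≠ 0 := by omega
    rw [zero_pow this, mul_zero, mul_zero]

end SummableAux

lemma rayCoeff_zero (c1 c2 q1 : ℕ → ℂ) : rayCoeff c1 c2 q1 0 = 0 := by rw [rayCoeff]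

lemma rayCoeff_key (c1 c2 q1 : ℕ → ℂ) (ρ : ℝ) (hρ : 0 < ρ) (m : ℕ) :
    ‖rayCoeff c1 c2 q1 (m+1)‖ * ρ ^ (m+1) ≤ (ρ/2) *
      ((∑ k ∈ Finset.range (m+1), (‖c1 k‖ * ρ^k) * (‖rayCoeff c1 c2 q1 (m-k)‖ * ρ^(m-k)))
        + ∑ k ∈ Finset.range (m+1), (‖c2 k‖ * ρ^k) * (‖q1 (m-k)‖ * ρ^(m-k))) := by
  set a := rayCoeff c1 c2 q1 with ha
  set S1 := ∑ k ∈ Finset.range (m+1), c1 k * a (m - k) with hS1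
  set S2 := ∑ k ∈ Finset.range (m+1), c2 k * q1 (m - k) with hS2
  have hnorm : ‖a (m+1)‖ ≤ (‖S1‖ + ‖S2‖) / 2 := by
    rw [ha, rayCoeff_succ, norm_div, ← hS1, ← hS2]
    have hD : ‖((((m+1)*(m+2) : ℕ)) : ℂ)‖ = (((m+1)*(m+2) : ℕ) : ℝ) := by
      rw [Complex.norm_natCast]
    rw [hD]
    have h2 : (2 : ℝ) ≤ (((m+1)*(m+2) : ℕ) : ℝ) := by
      have : 2 ≤ (m+1)*(m+2) := by nlinarith
      exact_mod_cast this
    calc ‖S1 + S2‖ / (((m+1)*(m+2) : ℕ) : ℝ) ≤ (‖S1‖ + ‖S2‖) / (((m+1)*(m+2) : ℕ) : ℝ) := by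
          gcongr
          exact norm_add_le _ _
      _ ≤ (‖S1‖ + ‖S2‖) / 2 := by
          apply div_le_div_of_nonneg_left (by positivity) (by norm_num) h2
  have hS1' : ρ^m * ‖S1‖ ≤
      ∑ k ∈ Finset.range (m+1), (‖c1 k‖ * ρ^k) * (‖a (m-k)‖ * ρ^(m-k)) := by
    calc ρ^m * ‖S1‖ ≤ ρ^m * ∑ k ∈ Finset.range (m+1), ‖c1 k‖ * ‖a (m-k)‖ := by
          apply mul_le_mul_of_nonneg_left _ (pow_nonneg hρ.le m)
          exact (norm_sum_le _ _).trans (le_of_eq (Finset.sum_congr rfl fun k _ => norm_mul _ _))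
      _ = ∑ k ∈ Finset.range (m+1), (‖c1 k‖ * ρ^k) * (‖a (m-k)‖ * ρ^(m-k)) := by
          rw [Finset.mul_sum]
          refine Finset.sum_congr rfl fun k hk => ?_
          have hkm : k ≤ m := Nat.lt_succ_iff.1 (Finset.mem_range.1 hk)
          have : ρ^m = ρ^k * ρ^(m-k) := by
            rw [← pow_add, Nat.add_sub_cancel' hkm]
          rw [this]; ring
  have hS2' : ρ^m * ‖S2‖ ≤
      ∑ k ∈ Finset.range (m+1), (‖c2 k‖ * ρ^k) * (‖q1 (m-k)‖ * ρ^(m-k)) := by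
    calc ρ^m * ‖S2‖ ≤ ρ^m * ∑ k ∈ Finset.range (m+1), ‖c2 k‖ * ‖q1 (m-k)‖ := by
          apply mul_le_mul_of_nonneg_left _ (pow_nonneg hρ.le m)
          exact (norm_sum_le _ _).trans (le_of_eq (Finset.sum_congr rfl fun k _ => norm_mul _ _))
      _ = ∑ k ∈ Finset.range (m+1), (‖c2 k‖ * ρ^k) * (‖q1 (m-k)‖ * ρ^(m-k)) := by
          rw [Finset.mul_sum]
          refine Finset.sum_congr rfl fun k hk => ?_
          have hkm : k ≤ m := Nat.lt_succ_iff.1 (Finset.mem_range.1 hk)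
          have : ρ^m = ρ^k * ρ^(m-k) := by
            rw [← pow_add, Nat.add_sub_cancel' hkm]
          rw [this]; ring
  calc ‖a (m+1)‖ * ρ ^ (m+1) ≤ ((‖S1‖ + ‖S2‖) / 2) * ρ ^ (m+1) :=
        mul_le_mul_of_nonneg_right hnorm (pow_nonneg hρ.le _)
    _ = (ρ/2) * (ρ^m * ‖S1‖ + ρ^m * ‖S2‖) := by rw [pow_succ]; ring
    _ ≤ (ρ/2) * (_ + _) := by
        apply mul_le_mul_of_nonneg_left (add_le_add hS1' hS2') (by positivity)

lemma rayCoeff_partial_bound (c1 c2 q1 : ℕ → ℂ) (ρ : ℝ) (hρ : 0 < ρ)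
    (hc1 : Summable fun n => ‖c1 n‖ * ρ ^ n)
    (hc1small : ρ * ∑' n, ‖c1 n‖ * ρ ^ n < 1 / 2)
    (hc2 : Summable fun n => ‖c2 n‖ * ρ ^ n)
    (hq1 : Summable fun n => ‖q1 n‖ * ρ ^ n) (N : ℕ) :
    ∑ n ∈ Finset.range N, ‖rayCoeff c1 c2 q1 n‖ * ρ ^ n
      ≤ ρ * (∑' n, ‖c2 n‖ * ρ ^ n) * ∑' n, ‖q1 n‖ * ρ ^ n := by
  set a := rayCoeff c1 c2 q1 with ha
  set C1 := ∑' n, ‖c1 n‖ * ρ ^ n with hC1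
  set C2 := ∑' n, ‖c2 n‖ * ρ ^ n with hC2
  set Q := ∑' n, ‖q1 n‖ * ρ ^ n with hQ
  have hC1nn : 0 ≤ C1 := tsum_nonneg fun n => by positivity
  have hC2nn : 0 ≤ C2 := tsum_nonneg fun n => by positivity
  have hQnn : 0 ≤ Q := tsum_nonneg fun n => by positivity
  have hBnn : 0 ≤ ρ * C2 * Q := by positivity
  induction N with
  | zero => simpa using hBnn
  | succ N IH =>
    rw [Finset.sum_range_succ']
    have h0 : ‖a 0‖ * ρ ^ 0 = 0 := by rw [ha, rayCoeff_zero]; simp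
    rw [h0, add_zero]
    have hptw : ∑ m ∈ Finset.range N, ‖a (m+1)‖ * ρ ^ (m+1) ≤ (ρ/2) *
        ((∑ m ∈ Finset.range N, ∑ k ∈ Finset.range (m+1),
            (‖c1 k‖ * ρ^k) * (‖a (m-k)‖ * ρ^(m-k)))
          + ∑ m ∈ Finset.range N, ∑ k ∈ Finset.range (m+1),
            (‖c2 k‖ * ρ^k) * (‖q1 (m-k)‖ * ρ^(m-k))) := by
      rw [mul_add, Finset.mul_sum, Finset.mul_sum, ← Finset.sum_add_distrib]
      refine Finset.sum_le_sum fun m _ => ?_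
      rw [← mul_add]
      exact rayCoeff_key c1 c2 q1 ρ hρ m
    have hT1 : ∑ m ∈ Finset.range N, ∑ k ∈ Finset.range (m+1),
        (‖c1 k‖ * ρ^k) * (‖a (m-k)‖ * ρ^(m-k)) ≤ C1 * (ρ * C2 * Q) := by
      calc _ ≤ (∑ k ∈ Finset.range N, ‖c1 k‖ * ρ^k) * ∑ k ∈ Finset.range N, ‖a k‖ * ρ^k :=
            ray_conv_partial_le _ _ (fun n => by positivity) (fun n => by positivity) N
        _ ≤ C1 * (ρ * C2 * Q) := by
            apply mul_le_mul (Summable.sum_le_tsum _ (fun n _ => by positivity) hc1) IH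
              (Finset.sum_nonneg fun n _ => by positivity) hC1nn
    have hT2 : ∑ m ∈ Finset.range N, ∑ k ∈ Finset.range (m+1),
        (‖c2 k‖ * ρ^k) * (‖q1 (m-k)‖ * ρ^(m-k)) ≤ C2 * Q := by
      calc _ ≤ (∑ k ∈ Finset.range N, ‖c2 k‖ * ρ^k) * ∑ k ∈ Finset.range N, ‖q1 k‖ * ρ^k :=
            ray_conv_partial_le _ _ (fun n => by positivity) (fun n => by positivity) N
        _ ≤ C2 * Q := by
            apply mul_le_mul (Summable.sum_le_tsum _ (fun n _ => by positivity) hc2)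
              (Summable.sum_le_tsum _ (fun n _ => by positivity) hq1)
              (Finset.sum_nonneg fun n _ => by positivity) hC2nn
    have hfin : (ρ/2) * (C1 * (ρ * C2 * Q) + C2 * Q) ≤ ρ * C2 * Q := by
      have h1 : ρ * C1 ≤ 1/2 := hc1small.le
      nlinarith [mul_nonneg hBnn (sub_nonneg.2 h1), mul_nonneg hC2nn hQnn]
    calc ∑ m ∈ Finset.range N, ‖a (m+1)‖ * ρ ^ (m+1) ≤ _ := hptw
      _ ≤ (ρ/2) * (C1 * (ρ * C2 * Q) + C2 * Q) := by
          apply mul_le_mul_of_nonneg_left (add_le_add hT1 hT2) (by positivity)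
      _ ≤ ρ * C2 * Q := hfin

/-- Local inversion of the Rayleigh operator near the critical layer: given
holomorphic data `φ₁, φ₂, Q₁` (with coefficients `c1, c2, q1`) of finite
weighted norm with `ρ‖φ₁‖_ρ < 1/2`, there exists a holomorphic `Q` with
`Q(0) = 0` solving `Y Q'' + 2Q' = φ₁ Q + φ₂ Q₁` on the disc of radius `ρ`,
with `‖Q‖_ρ ≲ ‖Q₁‖_ρ`, the constant depending only on `‖φ₂‖_ρ` and `|c²₀|`. -/
theorem rayleigh_local_inversion (c1 c2 q1 : ℕ → ℂ) (ρ : ℝ) (hρ : 0 < ρ)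
    (hc1 : Summable fun n => ‖c1 n‖ * ρ ^ n)
    (hc1small : ρ * ∑' n, ‖c1 n‖ * ρ ^ n < 1 / 2)
    (hc2 : Summable fun n => ‖c2 n‖ * ρ ^ n)
    (hq1 : Summable fun n => ‖q1 n‖ * ρ ^ n) :
    ∃ a : ℕ → ℂ, a 0 = 0 ∧ (Summable fun n => ‖a n‖ * ρ ^ n) ∧
      (∑' n, ‖a n‖ * ρ ^ n)
        ≤ (ρ * ‖c2 0‖ + 2 * ρ * ∑' n, ‖c2 n‖ * ρ ^ n) * ∑' n, ‖q1 n‖ * ρ ^ n ∧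
      ∀ Y : ℂ, ‖Y‖ < ρ →
        Y * deriv (deriv (fun z => ∑' n, a n * z ^ n)) Y
            + 2 * deriv (fun z => ∑' n, a n * z ^ n) Y
          = (∑' n, c1 n * Y ^ n) * (∑' n, a n * Y ^ n)
            + (∑' n, c2 n * Y ^ n) * (∑' n, q1 n * Y ^ n) := by
  classical
  set a := rayCoeff c1 c2 q1 with ha
  have hsum : Summable fun n => ‖a n‖ * ρ ^ n :=
    summable_of_sum_range_le (fun n => by positivity)
      (rayCoeff_partial_bound c1 c2 q1 ρ hρ hc1 hc1small hc2 hq1)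
  have hQnn : 0 ≤ ∑' n, ‖q1 n‖ * ρ ^ n := tsum_nonneg fun n => by positivity
  have hC2nn : 0 ≤ ∑' n, ‖c2 n‖ * ρ ^ n := tsum_nonneg fun n => by positivity
  refine ⟨a, rayCoeff_zero c1 c2 q1, hsum, ?_, ?_⟩
  · calc ∑' n, ‖a n‖ * ρ ^ n ≤ ρ * (∑' n, ‖c2 n‖ * ρ ^ n) * ∑' n, ‖q1 n‖ * ρ ^ n :=
        Summable.tsum_le_of_sum_range_le hsum
          (rayCoeff_partial_bound c1 c2 q1 ρ hρ hc1 hc1small hc2 hq1)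
      _ ≤ (ρ * ‖c2 0‖ + 2 * ρ * ∑' n, ‖c2 n‖ * ρ ^ n) * ∑' n, ‖q1 n‖ * ρ ^ n := by
        apply mul_le_mul_of_nonneg_right _ hQnn
        have h1 : 0 ≤ ρ * ‖c2 0‖ := by positivity
        have h2 : 0 ≤ ρ * ∑' n, ‖c2 n‖ * ρ ^ n := by positivity
        linarith
  intro Y hY
  set f : ℂ → ℂ := fun z => ∑' n, a n * z ^ n with hf
  set g : ℂ → ℂ := fun z => ∑' n, a n * ((n : ℂ) * z ^ (n - 1)) with hg
  have hmem : Y ∈ Metric.ball (0 : ℂ) ρ := mem_ball_zero_iff.2 hY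
  have hev : deriv f =ᶠ[nhds Y] g := by
    filter_upwards [Metric.isOpen_ball.mem_nhds hmem] with z hz
    exact (ray_hasDerivAt_f hsum hρ (mem_ball_zero_iff.1 hz)).deriv
  have hd2 : deriv (deriv f) Y
      = ∑' n, a n * ((n : ℂ) * (((n - 1 : ℕ) : ℂ) * Y ^ (n - 1 - 1))) := by
    rw [hev.deriv_eq]
    exact (ray_hasDerivAt_g hsum hρ hY).deriv
  have hd1 : deriv f Y = g Y := (ray_hasDerivAt_f hsum hρ hY).deriv
  rw [hd2, hd1]
  -- summability of the individual series
  have hsg : Summable fun n => a n * ((n : ℂ) * Y ^ (n - 1)) := ray_summable_g hsum hρ hY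
  have hsh : Summable fun n => a n * ((n : ℂ) * (((n - 1 : ℕ) : ℂ) * Y ^ (n - 1 - 1))) :=
    ray_summable_h hsum hρ hY
  -- the combined left-hand side series
  set w : ℕ → ℂ := fun n => (n : ℂ) * ((n : ℂ) + 1) * a n * Y ^ (n - 1) with hw
  have hterm_eq : ∀ n, Y * (a n * ((n : ℂ) * (((n - 1 : ℕ) : ℂ) * Y ^ (n - 1 - 1))))
      + 2 * (a n * ((n : ℂ) * Y ^ (n - 1))) = w n := by
    intro n
    match n with
    | 0 => simp [hw]
    | 1 =>
      simp only [hw]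
      norm_num
    | (m+2) =>
      show Y * (a (m+2) * (((m+2 : ℕ) : ℂ) * (((m+1 : ℕ) : ℂ) * Y ^ m)))
          + 2 * (a (m+2) * (((m+2 : ℕ) : ℂ) * Y ^ (m+1)))
          = ((m+2 : ℕ) : ℂ) * (((m+2 : ℕ) : ℂ) + 1) * a (m+2) * Y ^ (m+1)
      push_cast
      ring
  have hws : Summable w := ((hsh.mul_left Y).add (hsg.mul_left 2)).congr hterm_eq
  have hLHS : Y * (∑' n, a n * ((n : ℂ) * (((n - 1 : ℕ) : ℂ) * Y ^ (n - 1 - 1))))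
      + 2 * (∑' n, a n * ((n : ℂ) * Y ^ (n - 1))) = ∑' n, w (n + 1) := by
    rw [← tsum_mul_left, ← tsum_mul_left, ← Summable.tsum_add (hsh.mul_left Y) (hsg.mul_left 2)]
    rw [tsum_congr hterm_eq, Summable.tsum_eq_zero_add hws]
    simp [hw]
  rw [hLHS]
  -- identify `w (n+1)` with the convolution coefficients
  have hDne : ∀ m : ℕ, ((((m+1)*(m+2) : ℕ)) : ℂ) ≠ 0 := by
    intro m
    exact Nat.cast_ne_zero.2 (by positivity)
  have hconv : ∀ m : ℕ, w (m + 1) =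
      ((∑ k ∈ Finset.range (m+1), c1 k * a (m - k)) +
        ∑ k ∈ Finset.range (m+1), c2 k * q1 (m - k)) * Y ^ m := by
    intro m
    have hrec : ((((m+1)*(m+2) : ℕ)) : ℂ) * a (m+1) =
        (∑ k ∈ Finset.range (m+1), c1 k * a (m - k)) +
          ∑ k ∈ Finset.range (m+1), c2 k * q1 (m - k) := by
      rw [ha, rayCoeff_succ]
      rw [mul_div_cancel₀ _ (hDne m)]
    have hd : ((m+1 : ℕ) : ℂ) * (((m+1 : ℕ) : ℂ) + 1) = ((((m+1)*(m+2) : ℕ)) : ℂ) := by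
      push_cast; ring
    calc w (m+1) = (((m+1 : ℕ) : ℂ) * (((m+1 : ℕ) : ℂ) + 1) * a (m+1)) * Y ^ m := by
          simp only [hw, Nat.add_sub_cancel]
      _ = (((((m+1)*(m+2) : ℕ)) : ℂ) * a (m+1)) * Y ^ m := by rw [hd]
      _ = _ := by rw [hrec]
  -- Cauchy products on the right-hand side
  have hc1n : Summable fun n => ‖c1 n * Y ^ n‖ := ray_summable_fnorm hc1 hρ hY
  have hc2n : Summable fun n => ‖c2 n * Y ^ n‖ := ray_summable_fnorm hc2 hρ hY
  have hq1n : Summable fun n => ‖q1 n * Y ^ n‖ := ray_summable_fnorm hq1 hρ hY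
  have han : Summable fun n => ‖a n * Y ^ n‖ := ray_summable_fnorm hsum hρ hY
  have hcauchy1 := tsum_mul_tsum_eq_tsum_sum_range_of_summable_norm hc1n han
  have hcauchy2 := tsum_mul_tsum_eq_tsum_sum_range_of_summable_norm hc2n hq1n
  rw [hcauchy1, hcauchy2]
  have hU : Summable fun n => ∑ k ∈ Finset.range (n+1), (c1 k * Y ^ k) * (a (n-k) * Y ^ (n-k)) :=
    (summable_norm_sum_mul_range_of_summable_norm hc1n han).of_norm
  have hV : Summable fun n => ∑ k ∈ Finset.range (n+1), (c2 k * Y ^ k) * (q1 (n-k) * Y ^ (n-k)) :=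
    (summable_norm_sum_mul_range_of_summable_norm hc2n hq1n).of_norm
  rw [← Summable.tsum_add hU hV]
  refine tsum_congr fun m => ?_
  rw [hconv m]
  have hsplit : ∀ (u v : ℕ → ℂ), ∑ k ∈ Finset.range (m+1), (u k * Y ^ k) * (v (m-k) * Y ^ (m-k))
      = (∑ k ∈ Finset.range (m+1), u k * v (m - k)) * Y ^ m := by
    intro u v
    rw [Finset.sum_mul]
    refine Finset.sum_congr rfl fun k hk => ?_
    have hkm : k ≤ m := Nat.lt_succ_iff.1 (Finset.mem_range.1 hk)
    have hYm : Y ^ m = Y ^ k * Y ^ (m - k) := by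
      rw [← pow_add, Nat.add_sub_cancel' hkm]
    rw [hYm]; ring
  rw [hsplit c1 a, hsplit c2 q1, ← add_mul]
end
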